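/- Mass conservation for the fully discrete projection scheme (Theorem 6.3). Let δt > 0, let cⁿ, cⁿ⁺¹, μ̄ⁿ⁺¹, p̄ⁿ⁺¹ be cell-centered grid functions (with ghost values), let (uⁿ⁺¹, vⁿ⁺¹) be an edge-centered velocity satisfying uⁿ⁺¹_{1/2,j} = uⁿ⁺¹_{m₁+1/2,j} = 0 for 1 ≤ j ≤ m₂ and vⁿ⁺¹_{i,1/2} = vⁿ⁺¹_{i,m₂+1/2} = 0 for 1 ≤ i ≤ m₁, and set ρᵏ_{i,j} := ρ(cᵏ_{i,j}) for k = n, n+1 (assuming (ρ₂−ρ₁)cᵏ_{i,j}+ρ₁ ≠ 0 at all grid points used). Suppose that for all 1 ≤ i ≤ m₁, 1 ≤ j ≤ m₂: (continuity) d_x uⁿ⁺¹_{i,j} + d_y vⁿ⁺¹_{i,j} = (α/Pe)[d_x(A_x m(cⁿ)·D_x μ̄ⁿ⁺¹) + d_y(A_y m(cⁿ)·D_y μ̄ⁿ⁺¹)]_{i,j} + (α²/Pe)[d_x(A_x m(cⁿ)·D_x p̄ⁿ⁺¹) + d_y(A_y m(cⁿ)·D_y p̄ⁿ⁺¹)]_{i,j};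 (phase) ρⁿ_{i,j}(cⁿ⁺¹_{i,j}−cⁿ_{i,j})/δt + ½[ρⁿ⁺¹_{i+1,j} D_x cⁿ⁺¹_{i+1/2,j} uⁿ⁺¹_{i+1/2,j} + ρⁿ⁺¹_{i−1,j} D_x cⁿ⁺¹_{i−1/2,j} uⁿ⁺¹_{i−1/2,j}] + ½[ρⁿ⁺¹_{i,j+1} D_y cⁿ⁺¹_{i,j+1/2} vⁿ⁺¹_{i,j+1/2} + ρⁿ⁺¹_{i,j−1} D_y cⁿ⁺¹_{i,j−1/2} vⁿ⁺¹_{i,j−1/2}] = (1/Pe)[d_x(A_x m(cⁿ)·D_x μ̄ⁿ⁺¹) + d_y(A_y m(cⁿ)·D_y μ̄ⁿ⁺¹)]_{i,j} + (α/Pe)[d_x(A_x m(cⁿ)·D_x p̄ⁿ⁺¹) + d_y(A_y m(cⁿ)·D_y p̄ⁿ⁺¹)]_{i,j}. Then (ρⁿ⁺¹, 1)₂ = (ρⁿ, 1)₂. -/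

import Mathlib

open Finset

/-! Staggered-grid notation.  A grid function is a map `ℤ → ℤ → ℝ`.
For a cell-centered function `φ`, `φ i j` is the value `φ_{i,j}`.
For an east-west edge-centered function `u`, `u i j` is the value `u_{i+1/2,j}`.
For a north-south edge-centered function `v`, `v i j` is the value `v_{i,j+1/2}`.
For a vertex-centered function `f`, `f i j` is the value `f_{i+1/2,j+1/2}`. -/
abbrev GridFn := ℤ → ℤ → ℝ

/-- pointwise product of grid functions -/
noncomputable def gmul (f g : GridFn) : GridFn := fun i j => f i j * g i j

/-- the constant grid function `1` -/
noncomputable def oneG : GridFn := fun _ _ => (1 : ℝ)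

/-- edge-to-center average `a_x u_{i,j} = (u_{i+1/2,j}+u_{i-1/2,j})/2` -/
noncomputable def aX (u : GridFn) : GridFn := fun i j => (u i j + u (i - 1) j) / 2
/-- edge-to-center difference `d_x u_{i,j} = (u_{i+1/2,j}-u_{i-1/2,j})/h` -/
noncomputable def dX (h : ℝ) (u : GridFn) : GridFn := fun i j => (u i j - u (i - 1) j) / h
/-- edge-to-center average `a_y v_{i,j} = (v_{i,j+1/2}+v_{i,j-1/2})/2` -/
noncomputable def aY (v : GridFn) : GridFn := fun i j => (v i j + v i (j - 1)) / 2
/-- edge-to-center difference `d_y v_{i,j} = (v_{i,j+1/2}-v_{i,j-1/2})/h` -/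
noncomputable def dY (h : ℝ) (v : GridFn) : GridFn := fun i j => (v i j - v i (j - 1)) / h

/-- center-to-edge average `A_x φ_{i+1/2,j} = (φ_{i+1,j}+φ_{i,j})/2` -/
noncomputable def AX (φ : GridFn) : GridFn := fun i j => (φ (i + 1) j + φ i j) / 2
/-- center-to-edge difference `D_x φ_{i+1/2,j} = (φ_{i+1,j}-φ_{i,j})/h` -/
noncomputable def DX (h : ℝ) (φ : GridFn) : GridFn := fun i j => (φ (i + 1) j - φ i j) / h
/-- center-to-edge average `A_y φ_{i,j+1/2} = (φ_{i,j+1}+φ_{i,j})/2` -/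
noncomputable def AY (φ : GridFn) : GridFn := fun i j => (φ i (j + 1) + φ i j) / 2
/-- center-to-edge difference `D_y φ_{i,j+1/2} = (φ_{i,j+1}-φ_{i,j})/h` -/
noncomputable def DY (h : ℝ) (φ : GridFn) : GridFn := fun i j => (φ i (j + 1) - φ i j) / h

/-- center-to-vertex average `𝒜φ_{i+1/2,j+1/2}` -/
noncomputable def cavV (φ : GridFn) : GridFn :=
  fun i j => (φ i j + φ (i + 1) j + φ i (j + 1) + φ (i + 1) (j + 1)) / 4
/-- vertex-to-center average (the four vertices surrounding cell `(i,j)`) -/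
noncomputable def vavC (f : GridFn) : GridFn :=
  fun i j => (f (i - 1) (j - 1) + f i (j - 1) + f (i - 1) j + f i j) / 4

/-- edge-to-vertex average `𝒜_x v_{i+1/2,j+1/2} = (v_{i+1,j+1/2}+v_{i,j+1/2})/2` -/
noncomputable def eAX (v : GridFn) : GridFn := fun i j => (v (i + 1) j + v i j) / 2
/-- edge-to-vertex difference `𝒟_x v_{i+1/2,j+1/2} = (v_{i+1,j+1/2}-v_{i,j+1/2})/h` -/
noncomputable def eDX (h : ℝ) (v : GridFn) : GridFn := fun i j => (v (i + 1) j - v i j) / h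
/-- edge-to-vertex average `𝒜_y u_{i+1/2,j+1/2} = (u_{i+1/2,j+1}+u_{i+1/2,j})/2` -/
noncomputable def eAY (u : GridFn) : GridFn := fun i j => (u i (j + 1) + u i j) / 2
/-- edge-to-vertex difference `𝒟_y u_{i+1/2,j+1/2} = (u_{i+1/2,j+1}-u_{i+1/2,j})/h` -/
noncomputable def eDY (h : ℝ) (u : GridFn) : GridFn := fun i j => (u i (j + 1) - u i j) / h

/-- vertex-to-edge average `𝔄_x f_{i,j+1/2} = (f_{i+1/2,j+1/2}+f_{i-1/2,j+1/2})/2` -/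
noncomputable def vAX (f : GridFn) : GridFn := fun i j => (f i j + f (i - 1) j) / 2
/-- vertex-to-edge difference `𝔇_x f_{i,j+1/2} = (f_{i+1/2,j+1/2}-f_{i-1/2,j+1/2})/h` -/
noncomputable def vDX (h : ℝ) (f : GridFn) : GridFn := fun i j => (f i j - f (i - 1) j) / h
/-- vertex-to-edge average `𝔄_y f_{i+1/2,j} = (f_{i+1/2,j+1/2}+f_{i+1/2,j-1/2})/2` -/
noncomputable def vAY (f : GridFn) : GridFn := fun i j => (f i j + f i (j - 1)) / 2
/-- vertex-to-edge difference `𝔇_y f_{i+1/2,j} = (f_{i+1/2,j+1/2}-f_{i+1/2,j-1/2})/h` -/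
noncomputable def vDY (h : ℝ) (f : GridFn) : GridFn := fun i j => (f i j - f i (j - 1)) / h

/-- cell-centered inner product `(φ,ψ)₂ = Σ_{i=1}^{m₁} Σ_{j=1}^{m₂} φ_{i,j}ψ_{i,j}` -/
noncomputable def ip2 (m₁ m₂ : ℤ) (φ ψ : GridFn) : ℝ :=
  ∑ i ∈ Icc 1 m₁, ∑ j ∈ Icc 1 m₂, φ i j * ψ i j

/-- east-west edge inner product `[u,γ]_ew = (a_x(uγ),1)₂` -/
noncomputable def ipEW (m₁ m₂ : ℤ) (u γ : GridFn) : ℝ := ip2 m₁ m₂ (aX (gmul u γ)) oneG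

/-- north-south edge inner product `[v,ω]_ns = (a_y(vω),1)₂` -/
noncomputable def ipNS (m₁ m₂ : ℤ) (v ω : GridFn) : ℝ := ip2 m₁ m₂ (aY (gmul v ω)) oneG



/-- telescoping sum over `Icc 1 n` for natural `n` -/
lemma tele_nat_aux (f : ℤ → ℝ) (n : ℕ) :
    ∑ i ∈ Icc (1:ℤ) (n:ℤ), (f i - f (i-1)) = f (n:ℤ) - f 0 := by
  induction n with
  | zero => simp
  | succ n ih =>
      have hins : Icc (1:ℤ) ((n:ℤ)+1) = insert ((n:ℤ)+1) (Icc 1 (n:ℤ)) := by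
        ext x; simp only [mem_Icc, mem_insert]; omega
      push_cast
      rw [hins, Finset.sum_insert (by simp only [mem_Icc]; omega), ih]
      ring_nf

/-- telescoping sum over `Icc 1 m` -/
lemma tele_sum_aux (f : ℤ → ℝ) {m : ℤ} (hm : 0 ≤ m) :
    ∑ i ∈ Icc (1:ℤ) m, (f i - f (i-1)) = f m - f 0 := by
  have h : m = ((m.toNat : ℤ)) := (Int.toNat_of_nonneg hm).symm
  rw [h]; exact tele_nat_aux f m.toNat

/-- if the difference of two cell functions is a discrete divergence whose flux
vanishes on the boundary, their total masses agree -/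
lemma mass_sum_aux (m₁ m₂ : ℤ) (h δt : ℝ) (hm₁ : 1 ≤ m₁) (hm₂ : 1 ≤ m₂)
    (R S W Z : GridFn)
    (hW0 : ∀ j ∈ Icc (1:ℤ) m₂, W 0 j = 0 ∧ W m₁ j = 0)
    (hZ0 : ∀ i ∈ Icc (1:ℤ) m₁, Z i 0 = 0 ∧ Z i m₂ = 0)
    (key : ∀ i ∈ Icc (1:ℤ) m₁, ∀ j ∈ Icc (1:ℤ) m₂,
      S i j - R i j = -δt/h * ((W i j - W (i-1) j) + (Z i j - Z i (j-1)))) :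
    ip2 m₁ m₂ S oneG = ip2 m₁ m₂ R oneG := by
  rw [← sub_eq_zero]
  have h1 : ip2 m₁ m₂ S oneG - ip2 m₁ m₂ R oneG
      = ∑ i ∈ Icc (1:ℤ) m₁, ∑ j ∈ Icc (1:ℤ) m₂, (S i j - R i j) := by
    simp [ip2, oneG, Finset.sum_sub_distrib]
  rw [h1, Finset.sum_congr rfl (fun i hi => Finset.sum_congr rfl (fun j hj => key i hi j hj))]
  have hW2 : ∑ i ∈ Icc (1:ℤ) m₁, ∑ j ∈ Icc (1:ℤ) m₂, (-δt/h * (W i j - W (i-1) j)) = 0 := by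
    rw [Finset.sum_comm]
    refine Finset.sum_eq_zero fun j hj => ?_
    rw [← Finset.mul_sum, tele_sum_aux (fun i => W i j) (by omega),
      (hW0 j hj).2, (hW0 j hj).1, sub_zero, mul_zero]
  have hZ2 : ∑ i ∈ Icc (1:ℤ) m₁, ∑ j ∈ Icc (1:ℤ) m₂, (-δt/h * (Z i j - Z i (j-1))) = 0 := by
    refine Finset.sum_eq_zero fun i hi => ?_
    rw [← Finset.mul_sum, tele_sum_aux (fun j => Z i j) (by omega),
      (hZ0 i hi).2, (hZ0 i hi).1, sub_zero, mul_zero]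
  calc ∑ i ∈ Icc (1:ℤ) m₁, ∑ j ∈ Icc (1:ℤ) m₂,
        (-δt/h * ((W i j - W (i-1) j) + (Z i j - Z i (j-1))))
      = (∑ i ∈ Icc (1:ℤ) m₁, ∑ j ∈ Icc (1:ℤ) m₂, (-δt/h * (W i j - W (i-1) j)))
        + ∑ i ∈ Icc (1:ℤ) m₁, ∑ j ∈ Icc (1:ℤ) m₂, (-δt/h * (Z i j - Z i (j-1))) := by
        simp [mul_add, Finset.sum_add_distrib]
    _ = 0 := by rw [hW2, hZ2, add_zero]

/-- the pointwise algebraic core of the mass-conservation argument -/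
lemma keyAlg_aux (h δt Pe ρ₁ ρ₂ a b aE aW aN aS u0 uW v0 vS Fμ Fp : ℝ)
    (hh : h ≠ 0) (hδt : δt ≠ 0) (h1 : ρ₁ ≠ 0) (h2 : ρ₂ ≠ 0)
    (da : (ρ₂-ρ₁)*a+ρ₁ ≠ 0) (db : (ρ₂-ρ₁)*b+ρ₁ ≠ 0)
    (dE : (ρ₂-ρ₁)*aE+ρ₁ ≠ 0) (dW : (ρ₂-ρ₁)*aW+ρ₁ ≠ 0)
    (dN : (ρ₂-ρ₁)*aN+ρ₁ ≠ 0) (dS : (ρ₂-ρ₁)*aS+ρ₁ ≠ 0)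
    (e1 : (u0 - uW)/h + (v0 - vS)/h
        = (ρ₂-ρ₁)/(ρ₁*ρ₂)/Pe * Fμ + ((ρ₂-ρ₁)/(ρ₁*ρ₂))^2/Pe * Fp)
    (e2 : ρ₁*ρ₂/((ρ₂-ρ₁)*b+ρ₁) * (a - b) / δt
        + (ρ₁*ρ₂/((ρ₂-ρ₁)*aE+ρ₁) * ((aE-a)/h) * u0
           + ρ₁*ρ₂/((ρ₂-ρ₁)*aW+ρ₁) * ((a-aW)/h) * uW)/2
        + (ρ₁*ρ₂/((ρ₂-ρ₁)*aN+ρ₁) * ((aN-a)/h) * v0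
           + ρ₁*ρ₂/((ρ₂-ρ₁)*aS+ρ₁) * ((a-aS)/h) * vS)/2
        = 1/Pe * Fμ + (ρ₂-ρ₁)/(ρ₁*ρ₂)/Pe * Fp) :
    ρ₁*ρ₂/((ρ₂-ρ₁)*a+ρ₁) - ρ₁*ρ₂/((ρ₂-ρ₁)*b+ρ₁)
      = -δt/h * ((u0 * ((ρ₁*ρ₂/((ρ₂-ρ₁)*aE+ρ₁) + ρ₁*ρ₂/((ρ₂-ρ₁)*a+ρ₁))/2)
                  - uW * ((ρ₁*ρ₂/((ρ₂-ρ₁)*a+ρ₁) + ρ₁*ρ₂/((ρ₂-ρ₁)*aW+ρ₁))/2))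
               + (v0 * ((ρ₁*ρ₂/((ρ₂-ρ₁)*aN+ρ₁) + ρ₁*ρ₂/((ρ₂-ρ₁)*a+ρ₁))/2)
                  - vS * ((ρ₁*ρ₂/((ρ₂-ρ₁)*a+ρ₁) + ρ₁*ρ₂/((ρ₂-ρ₁)*aS+ρ₁))/2))) := by
  set α := (ρ₂-ρ₁)/(ρ₁*ρ₂) with hα
  set ra := ρ₁*ρ₂/((ρ₂-ρ₁)*a+ρ₁) with hra
  set rb := ρ₁*ρ₂/((ρ₂-ρ₁)*b+ρ₁) with hrb
  set rE := ρ₁*ρ₂/((ρ₂-ρ₁)*aE+ρ₁) with hrE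
  set rW := ρ₁*ρ₂/((ρ₂-ρ₁)*aW+ρ₁) with hrW
  set rN := ρ₁*ρ₂/((ρ₂-ρ₁)*aN+ρ₁) with hrN
  set rS := ρ₁*ρ₂/((ρ₂-ρ₁)*aS+ρ₁) with hrS
  have e3 : (u0 - uW)/h + (v0 - vS)/h
      = α * (rb * (a - b) / δt
        + (rE * ((aE-a)/h) * u0 + rW * ((a-aW)/h) * uW)/2
        + (rN * ((aN-a)/h) * v0 + rS * ((a-aS)/h) * vS)/2) := by
    linear_combination e1 - α * e2
  have A1 : α * ra * rE * (aE - a) = ra - rE := by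
    rw [hα, hra, hrE]; field_simp; ring
  have A2 : α * rW * ra * (a - aW) = rW - ra := by
    rw [hα, hra, hrW]; field_simp; ring
  have A3 : α * ra * rN * (aN - a) = ra - rN := by
    rw [hα, hra, hrN]; field_simp; ring
  have A4 : α * rS * ra * (a - aS) = rS - ra := by
    rw [hα, hra, hrS]; field_simp; ring
  have B : α * ra * rb * (a - b) = rb - ra := by
    rw [hα, hra, hrb]; field_simp; ring
  clear_value α ra rb rE rW rN rS
  clear hα hra hrb hrE hrW hrN hrS e1 e2
  have e4 := congrArg (fun x => (δt * ra) * x) e3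
  field_simp at e4
  field_simp
  have hc : (2 * h^2 * δt : ℝ) ≠ 0 := by positivity
  apply mul_right_cancel₀ hc
  linear_combination (2*h^2*δt) * e4 + (4*h^3*δt) * B + (2*h^2*δt^2*u0) * A1
    + (2*h^2*δt^2*uW) * A2 + (2*h^2*δt^2*v0) * A3 + (2*h^2*δt^2*vS) * A4

/-- Theorem 6.3: total-mass conservation for the fully discrete projection scheme.
Here `ρ(c) = ρ₁ρ₂/((ρ₂−ρ₁)c+ρ₁)`, `m(c) = √(c²(1−c)²+ε)` and
`α = (ρ₂−ρ₁)/(ρ₁ρ₂)`. -/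
theorem fully_discrete_projection_mass_conservation
    (m₁ m₂ : ℤ) (h δt Pe ε ρ₁ ρ₂ : ℝ)
    (hm₁ : 1 ≤ m₁) (hm₂ : 1 ≤ m₂) (hh : 0 < h) (hδt : 0 < δt)
    (hPe : 0 < Pe) (hε : 0 < ε) (hρ₁ : 0 < ρ₁) (hρ₂ : 0 < ρ₂)
    (cn cn1 μb pb u v : GridFn)
    -- nonvanishing of the density denominator at all grid points used
    (hne : ∀ i ∈ Icc 0 (m₁ + 1), ∀ j ∈ Icc 0 (m₂ + 1),
      (ρ₂ - ρ₁) * cn i j + ρ₁ ≠ 0 ∧ (ρ₂ - ρ₁) * cn1 i j + ρ₁ ≠ 0)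
    -- normal boundary values of the velocity vanish
    (hubc : ∀ j ∈ Icc 1 m₂, u 0 j = 0 ∧ u m₁ j = 0)
    (hvbc : ∀ i ∈ Icc 1 m₁, v i 0 = 0 ∧ v i m₂ = 0) :
    let α : ℝ := (ρ₂ - ρ₁) / (ρ₁ * ρ₂)
    let ρfun : ℝ → ℝ := fun s => ρ₁ * ρ₂ / ((ρ₂ - ρ₁) * s + ρ₁)
    let mfun : ℝ → ℝ := fun s => Real.sqrt (s ^ 2 * (1 - s) ^ 2 + ε)
    let ρn : GridFn := fun i j => ρfun (cn i j)
    let ρn1 : GridFn := fun i j => ρfun (cn1 i j)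
    let mc : GridFn := fun i j => mfun (cn i j)
    let fluxμ : GridFn := fun i j =>
      dX h (gmul (AX mc) (DX h μb)) i j + dY h (gmul (AY mc) (DY h μb)) i j
    let fluxp : GridFn := fun i j =>
      dX h (gmul (AX mc) (DX h pb)) i j + dY h (gmul (AY mc) (DY h pb)) i j
    -- discrete continuity equation
    (∀ i ∈ Icc 1 m₁, ∀ j ∈ Icc 1 m₂,
      dX h u i j + dY h v i j = α / Pe * fluxμ i j + α ^ 2 / Pe * fluxp i j) →
    -- discrete phase equation
    (∀ i ∈ Icc 1 m₁, ∀ j ∈ Icc 1 m₂,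
      ρn i j * (cn1 i j - cn i j) / δt
        + (ρn1 (i + 1) j * DX h cn1 i j * u i j
            + ρn1 (i - 1) j * DX h cn1 (i - 1) j * u (i - 1) j) / 2
        + (ρn1 i (j + 1) * DY h cn1 i j * v i j
            + ρn1 i (j - 1) * DY h cn1 i (j - 1) * v i (j - 1)) / 2
        = 1 / Pe * fluxμ i j + α / Pe * fluxp i j) →
    ip2 m₁ m₂ ρn1 oneG = ip2 m₁ m₂ ρn oneG := by
  intro α ρfun mfun ρn ρn1 mc fluxμ fluxp hcont hphase
  have hh' : h ≠ 0 := ne_of_gt hh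
  have hδt' : δt ≠ 0 := ne_of_gt hδt
  have h1' : ρ₁ ≠ 0 := ne_of_gt hρ₁
  have h2' : ρ₂ ≠ 0 := ne_of_gt hρ₂
  apply mass_sum_aux m₁ m₂ h δt hm₁ hm₂ ρn ρn1 (gmul u (AX ρn1)) (gmul v (AY ρn1))
  · intro j hj
    constructor <;> simp [gmul, (hubc j hj).1, (hubc j hj).2]
  · intro i hi
    constructor <;> simp [gmul, (hvbc i hi).1, (hvbc i hi).2]
  · intro i hi j hj
    have hi' := mem_Icc.mp hi
    have hj' := mem_Icc.mp hj
    have hmem : ∀ a b : ℤ, 0 ≤ a → a ≤ m₁ + 1 → 0 ≤ b → b ≤ m₂ + 1 →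
        (ρ₂ - ρ₁) * cn1 a b + ρ₁ ≠ 0 :=
      fun a b h1 h2 h3 h4 => (hne a (mem_Icc.mpr ⟨h1, h2⟩) b (mem_Icc.mpr ⟨h3, h4⟩)).2
    have db : (ρ₂ - ρ₁) * cn i j + ρ₁ ≠ 0 :=
      (hne i (mem_Icc.mpr ⟨by omega, by omega⟩) j (mem_Icc.mpr ⟨by omega, by omega⟩)).1
    have da := hmem i j (by omega) (by omega) (by omega) (by omega)
    have dE := hmem (i+1) j (by omega) (by omega) (by omega) (by omega)
    have dW := hmem (i-1) j (by omega) (by omega) (by omega) (by omega)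
    have dN := hmem i (j+1) (by omega) (by omega) (by omega) (by omega)
    have dS := hmem i (j-1) (by omega) (by omega) (by omega) (by omega)
    have e1 := hcont i hi j hj
    have e2 := hphase i hi j hj
    simp only [dX, dY, DX, DY, gmul, AX, AY, ρn, ρn1, ρfun] at e1 e2 ⊢
    rw [show i - 1 + 1 = i from by ring, show j - 1 + 1 = j from by ring] at e2 ⊢
    exact keyAlg_aux h δt Pe ρ₁ ρ₂ (cn1 i j) (cn i j) (cn1 (i+1) j) (cn1 (i-1) j)
      (cn1 i (j+1)) (cn1 i (j-1)) (u i j) (u (i-1) j) (v i j) (v i (j-1))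
      (fluxμ i j) (fluxp i j) hh' hδt' h1' h2' da db dE dW dN dS e1 e2
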